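/- Let α, β, δ, h be positive reals with 1 + αδ > δ. Then the Euler Jacobian matrix J_E at E* satisfies the exact identity 1 − trace(J_E) + det(J_E) = h²βP* = h²βδN*; in particular 1 − trace(J_E) + det(J_E) > 0 for every step size h > 0. -/

import Mathlib

/-- For positive parameters with 1 + αδ > δ, the Euler Jacobian
J_E at E* satisfies the exact identity
1 − trace(J_E) + det(J_E) = h²βP* = h²βδN*, which is positive for every h > 0. -/
theorem stmt_14 (α β δ h : ℝ) (hα : 0 < α) (hβ : 0 < β) (hδ : 0 < δ) (hh : 0 < h)
    (h1 : 1 + α * δ > δ)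
    (Nstar Pstar : ℝ)
    (hN : Nstar = (1 + α * δ - δ) / (1 + α * δ))
    (hP : Pstar = δ * Nstar)
    (J : Matrix (Fin 2) (Fin 2) ℝ)
    (hJ : J = !![1 - h * Nstar * (1 - Pstar / (Nstar + α * Pstar) ^ 2),
                 -(h * (Nstar / (Nstar + α * Pstar)) ^ 2);
                 h * β * (Pstar / Nstar) ^ 2,
                 1 - h * β * Pstar / Nstar]) :
    1 - Matrix.trace J + J.det = h ^ 2 * β * Pstar ∧
      1 - Matrix.trace J + J.det = h ^ 2 * β * δ * Nstar ∧
      0 < 1 - Matrix.trace J + J.det := by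
  have hden : (0:ℝ) < 1 + α * δ := by nlinarith
  have hNpos : 0 < Nstar := by
    rw [hN]; exact div_pos (by linarith) hden
  have hPpos : 0 < Pstar := by rw [hP]; positivity
  have hsum : Nstar + α * Pstar = Nstar * (1 + α * δ) := by rw [hP]; ring
  have hsumpos : 0 < Nstar + α * Pstar := by rw [hsum]; positivity
  have key : 1 - Matrix.trace J + J.det = h ^ 2 * β * Pstar := by
    subst hJ
    rw [Matrix.trace_fin_two_of, Matrix.det_fin_two_of]
    field_simp
    ring
  refine ⟨key, ?_, ?_⟩
  · rw [key, hP]; ring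
  · rw [key]; positivity
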